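/- For every w ∈ (0,1), the system of equalities α/((1−α)u) = −v + 1/(1−α) = ((1−α)u + α)/((1−α)(1−v)) with α = w has a solution (u,v) with u, v ∈ (0,1), provided 1/4 ≤ w < 1. -/

import Mathlib

theorem uv_system_solvable (w : ℝ) (hw1 : 1/4 ≤ w) (hw2 : w < 1) :
    ∃ u v : ℝ, 0 < u ∧ u < 1 ∧ 0 < v ∧ v < 1 ∧
      w/((1-w)*u) = -v + 1/(1-w) ∧
      -v + 1/(1-w) = ((1-w)*u + w)/((1-w)*(1-v)) := by
  have hw0 : 0 < w := by linarith
  have h1w : 0 < 1 - w := by linarith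
  set β : ℝ := (1-w)/w with hβ
  have hβpos : 0 < β := div_pos h1w hw0
  have hle : 1 - w ≤ β := by
    rw [hβ, le_div_iff₀ hw0]; nlinarith
  have hcont : ContinuousOn (fun s : ℝ => s^3+s^2+s) (Set.Icc (1-w) β) := by
    fun_prop
  have hmem : β ∈ Set.Ioo ((1-w)^3+(1-w)^2+(1-w)) (β^3+β^2+β) := by
    constructor
    · rw [hβ, lt_div_iff₀ hw0]
      nlinarith [pow_pos h1w 3]
    · nlinarith [pow_pos hβpos 3, sq_nonneg β]
  obtain ⟨s, hsI, hfs⟩ := intermediate_value_Ioo hle hcont hmem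
  simp only [Set.mem_Ioo] at hsI
  obtain ⟨hs1, hs2⟩ := hsI
  have hs0 : 0 < s := lt_trans h1w hs1
  have hfs' : s^3+s^2+s = β := hfs
  have hkey : w * (s^3+s^2+s) = 1 - w := by
    rw [hβ, eq_div_iff hw0.ne'] at hfs'
    linarith
  have hws : w * s < 1 - w := by
    rw [hβ, lt_div_iff₀ hw0] at hs2; linarith [hs2]
  refine ⟨w*s/(1-w), 1/(1-w) - 1/s, ?_, ?_, ?_, ?_, ?_, ?_⟩
  · positivity
  · rw [div_lt_one h1w]; linarith
  · have : 1/s < 1/(1-w) := by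
      rw [div_lt_div_iff₀ hs0 h1w]; linarith
    linarith
  · have h1 : w/(1-w) < 1/s := by
      rw [div_lt_div_iff₀ h1w hs0]; linarith
    have h2 : 1/(1-w) = w/(1-w) + 1 := by field_simp; ring
    linarith
  · field_simp
    ring
  · have hv1 : 1 - (1/(1-w) - 1/s) > 0 := by
      have h1 : w/(1-w) < 1/s := by
        rw [div_lt_div_iff₀ h1w hs0]; linarith
      have h2 : 1/(1-w) = w/(1-w) + 1 := by field_simp; ring
      linarith
    have hDpos : 0 < (1-w)*(1 - (1/(1-w) - 1/s)) := mul_pos h1w hv1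
    rw [eq_div_iff hDpos.ne']
    field_simp
    linear_combination (-(1-w)^3 - (w-1)*(w-2)*w) * hkey
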